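/- All roots of the r-Bell polynomial B_{n,r}(x) are real and nonpositive. -/

import Mathlib

/-- `rS r n k` is the r-Stirling number of the second kind `S_r(n+r, k+r)`. -/
def rS (r : ℕ) : ℕ → ℕ → ℕ
  | 0, 0 => 1
  | 0, _ + 1 => 0
  | n + 1, 0 => r * rS r n 0
  | n + 1, k + 1 => (k + 1 + r) * rS r n (k + 1) + rS r n k

/-- The r-Stirling number of the second kind `S_r(n,k)`. -/
def rStirling (r n k : ℕ) : ℕ :=
  if r ≤ n ∧ r ≤ k then rS r (n - r) (k - r) else 0

/-- The r-Bell polynomial `B_{n,r}(x)` as a real function. -/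
def rBellPoly (r n : ℕ) (x : ℝ) : ℝ :=
  ∑ k ∈ Finset.range (n + 1), (rS r n k : ℝ) * x ^ k

/-- The r-Bell number `B_{n,r}`. -/
def rBell (r n : ℕ) : ℕ :=
  ∑ k ∈ Finset.range (n + 1), rS r n k

open Polynomial Finset

/-- The r-Bell polynomial as a real polynomial. -/
noncomputable def rBP (r n : ℕ) : Polynomial ℝ :=
  ∑ k ∈ Finset.range (n + 1), Polynomial.C (rS r n k : ℝ) * Polynomial.X ^ k

lemma rS_eq_zero_of_lt (r : ℕ) : ∀ n k, n < k → rS r n k = 0 := by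
  intro n
  induction n with
  | zero => intro k hk; match k, hk with
    | k + 1, _ => rfl
  | succ n ih =>
    intro k hk
    match k, hk with
    | k + 1, hk =>
      show (k + 1 + r) * rS r n (k + 1) + rS r n k = 0
      rw [ih (k+1) (by omega), ih k (by omega)]
      ring

lemma rBP_coeff (r n k : ℕ) : (rBP r n).coeff k = if k ≤ n then (rS r n k : ℝ) else 0 := by
  by_cases h : k ≤ n
  · rw [if_pos h, rBP, Polynomial.finset_sum_coeff]
    simp only [Polynomial.coeff_C_mul, Polynomial.coeff_X_pow]
    rw [Finset.sum_eq_single k]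
    · simp
    · intro b _ hb; simp [Ne.symm hb]
    · intro hk; exact absurd (Finset.mem_range.mpr (by omega)) hk
  · rw [if_neg h, rBP, Polynomial.finset_sum_coeff]
    simp only [Polynomial.coeff_C_mul, Polynomial.coeff_X_pow]
    apply Finset.sum_eq_zero
    intro b hb
    simp only [Finset.mem_range] at hb
    have hbk : b ≠ k := by omega
    simp only [mul_ite, mul_one, mul_zero, ite_eq_right_iff]
    intro h
    exact (hbk h.symm).elim

lemma rBP_succ (r n : ℕ) :
    rBP r (n + 1) = X * derivative (rBP r n) + (X + C (r : ℝ)) * rBP r n := by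
  have expand : (X + C (r : ℝ)) * rBP r n = X * rBP r n + C (r : ℝ) * rBP r n := by ring
  ext k
  rw [expand, Polynomial.coeff_add, Polynomial.coeff_add, Polynomial.coeff_C_mul]
  rcases k with _ | k
  · rw [Polynomial.mul_coeff_zero, Polynomial.mul_coeff_zero]
    simp only [coeff_X_zero, zero_mul, rBP_coeff]
    show ((r * rS r n 0 : ℕ) : ℝ) = _
    push_cast
    simp
  · rw [Polynomial.coeff_X_mul, Polynomial.coeff_X_mul, Polynomial.coeff_derivative]
    simp only [rBP_coeff]
    have hdef : rS r (n + 1) (k + 1) = (k + 1 + r) * rS r n (k + 1) + rS r n k := rfl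
    by_cases hk : k + 1 ≤ n
    · simp only [if_pos hk, if_pos (by omega : k ≤ n), if_pos (by omega : k + 1 ≤ n + 1), hdef]
      push_cast
      ring
    · by_cases hk' : k ≤ n
      · have hkn : k = n := by omega
        simp only [if_neg hk, if_pos hk', if_pos (by omega : k + 1 ≤ n + 1), hdef]
        rw [show rS r n (k + 1) = 0 from rS_eq_zero_of_lt r n (k+1) (by omega)]
        push_cast
        ring
      · simp only [if_neg hk, if_neg hk', if_neg (by omega : ¬ (k + 1 ≤ n + 1))]
        ring

lemma exists_zero_of_mul_neg {f : ℝ → ℝ} (hf : Continuous f) {c d : ℝ} (hcd : c < d)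
    (h : f c * f d < 0) : ∃ x ∈ Set.Ioo c d, f x = 0 := by
  rcases mul_neg_iff.mp h with ⟨h1, h2⟩ | ⟨h1, h2⟩
  · obtain ⟨x, hx, hfx⟩ := intermediate_value_Ioo' hcd.le hf.continuousOn
      (show (0:ℝ) ∈ Set.Ioo (f d) (f c) from ⟨h2, h1⟩)
    exact ⟨x, hx, hfx⟩
  · obtain ⟨x, hx, hfx⟩ := intermediate_value_Ioo hcd.le hf.continuousOn
      (show (0:ℝ) ∈ Set.Ioo (f c) (f d) from ⟨h1, h2⟩)
    exact ⟨x, hx, hfx⟩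

lemma neg_prod_sign {n : ℕ} (s : Finset (Fin n)) (g : Fin n → ℝ) (hg : ∀ i ∈ s, 0 < g i) :
    0 < (-1 : ℝ) ^ s.card * ∏ i ∈ s, (-(g i)) := by
  have : ∏ i ∈ s, (-(g i)) = (-1 : ℝ) ^ s.card * ∏ i ∈ s, g i := by
    rw [← Finset.prod_const, ← Finset.prod_mul_distrib]
    exact Finset.prod_congr rfl fun i _ => by ring
  rw [this, ← mul_assoc, ← pow_add, ← two_mul, pow_mul]
  simpa using Finset.prod_pos hg

/-- sign of the evaluation of `∏ (x - u k)` at the root index j: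
   `0 < (-1)^j * ∏_{k ∈ erase j} (a k - a j)` for strictly monotone `a`. -/
lemma sign_erase_prod {n : ℕ} (a : Fin n → ℝ) (ha : StrictMono a) (j : Fin n) :
    0 < (-1 : ℝ) ^ (j : ℕ) * ∏ k ∈ Finset.univ.erase j, (a k - a j) := by
  have hsplit : Finset.univ.erase j = Finset.Iio j ∪ Finset.Ioi j := by
    ext x
    simp [lt_or_lt_iff_ne, ne_comm]
  have hdisj : Disjoint (Finset.Iio j) (Finset.Ioi j) := by
    simp [Finset.disjoint_left]
    intro x hx; exact le_of_lt hx
  rw [hsplit, Finset.prod_union hdisj]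
  have h2 : 0 < ∏ k ∈ Finset.Ioi j, (a k - a j) :=
    Finset.prod_pos fun k hk => sub_pos.mpr (ha (Finset.mem_Ioi.mp hk))
  have h1 : 0 < (-1 : ℝ) ^ (j : ℕ) * ∏ k ∈ Finset.Iio j, (a k - a j) := by
    have : ∀ k ∈ Finset.Iio j, (a k - a j) = -(a j - a k) := fun k _ => by ring
    rw [Finset.prod_congr rfl this]
    have := neg_prod_sign (Finset.Iio j) (fun k => a j - a k) ?_
    · rwa [Fin.card_Iio] at this
    · intro k hk; exact sub_pos.mpr (ha (Finset.mem_Iio.mp hk))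
  rw [← mul_assoc]
  exact mul_pos h1 h2

lemma key {n : ℕ} (s : ℝ) (hs : 0 < s) (a : Fin n → ℝ) (ha : StrictMono a)
    (hpos : ∀ i, 0 < a i) :
    ∃ b : Fin (n + 1) → ℝ, StrictMono b ∧ (∀ j, 0 < b j) ∧
      X * derivative (∏ i, (X + C (a i))) + (X + C s) * ∏ i, (X + C (a i)) =
        ∏ j, (X + C (b j)) := by
  rcases Nat.eq_zero_or_pos n with rfl | hn
  · refine ⟨fun _ => s, ?_, fun _ => hs, ?_⟩
    · intro i k hik
      have hi := i.isLt
      have hk := k.isLt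
      rw [Fin.lt_def] at hik
      omega
    · simp
  set P : ℝ[X] := ∏ i, (X + C (a i)) with hPdef
  set Q : ℝ[X] := X * derivative P + (X + C s) * P with hQdef
  have hPm : P.Monic := monic_prod_of_monic _ _ fun i _ => monic_X_add_C _
  have hPdeg : P.natDegree = n := by
    rw [hPdef, Polynomial.natDegree_prod _ _ fun i _ => (monic_X_add_C (a i)).ne_zero]
    simp [Polynomial.natDegree_X_add_C]
  have hdlt : (X * derivative P).degree < ((X + C s) * P).degree := by
    by_cases hd : derivative P = 0
    · rw [hd, mul_zero]
      simp only [Polynomial.degree_zero]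
      exact WithBot.bot_lt_iff_ne_bot.mpr (by
        simp [Polynomial.degree_eq_bot, hPm.ne_zero])
    · rw [Polynomial.degree_mul, Polynomial.degree_mul, Polynomial.degree_X,
        Polynomial.degree_X_add_C]
      exact WithBot.add_lt_add_left (by simp) (Polynomial.degree_derivative_lt hPm.ne_zero)
  have hQm : Q.Monic := by
    rw [hQdef, add_comm]
    exact ((monic_X_add_C s).mul hPm).add_of_left hdlt
  have hQdeg : Q.natDegree = n + 1 := by
    have hdeg1 : ((X + C s) * P).natDegree = n + 1 := by
      rw [((monic_X_add_C s)).natDegree_mul hPm, Polynomial.natDegree_X_add_C, hPdeg,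
        add_comm]
    have : Q.degree = ((X + C s) * P).degree := by
      rw [hQdef, Polynomial.degree_add_eq_right_of_degree_lt hdlt]
    rw [← hdeg1]
    exact Polynomial.natDegree_eq_of_degree_eq_some (by
      rw [this, Polynomial.degree_eq_natDegree ((monic_X_add_C s).mul hPm).ne_zero])
  have hPeval : ∀ x : ℝ, P.eval x = ∏ i, (x + a i) := by
    intro x; simp [hPdef, Polynomial.eval_prod]
  have hQeval : ∀ x : ℝ, Q.eval x =
      x * (derivative P).eval x + (x + s) * P.eval x := by
    intro x; simp [hQdef]
  have hDeval : ∀ j, (derivative P).eval (-(a j)) = ∏ k ∈ Finset.univ.erase j, (a k - a j) := by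
    intro j
    have hfac : P = (X + C (a j)) * ∏ k ∈ Finset.univ.erase j, (X + C (a k)) :=
      (Finset.mul_prod_erase _ _ (Finset.mem_univ j)).symm
    rw [hfac, derivative_mul]
    simp only [Polynomial.derivative_add, Polynomial.derivative_X, Polynomial.derivative_C,
      add_zero, one_mul, Polynomial.eval_add, Polynomial.eval_mul, Polynomial.eval_X,
      Polynomial.eval_C, Polynomial.eval_prod]
    rw [show -(a j) + a j = 0 by ring, zero_mul, add_zero]
    exact Finset.prod_congr rfl fun k _ => by ring
  have hQt : ∀ j, Q.eval (-(a j)) = -(a j) * ∏ k ∈ Finset.univ.erase j, (a k - a j) := by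
    intro j
    rw [hQeval, hDeval, hPeval, Finset.prod_eq_zero (Finset.mem_univ j) (by ring), mul_zero,
      add_zero]
  -- the extended sequence of test points
  set T : Fin (n + 1) → ℝ := Fin.cons 0 (fun i => -(a i)) with hTdef
  have hT : StrictAnti T := by
    intro i k hik
    induction k using Fin.cases with
    | zero => exact absurd hik (by simp [Fin.lt_def])
    | succ k =>
      induction i using Fin.cases with
      | zero => simpa [hTdef] using hpos k
      | succ i =>
        have : i < k := by
          rw [Fin.lt_def] at hik ⊢
          simpa using hik
        simpa [hTdef] using ha this
  have hT0 : T 0 = 0 := by simp [hTdef]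
  have hQsign : ∀ j : Fin (n + 1), 0 < (-1 : ℝ) ^ (j : ℕ) * Q.eval (T j) := by
    intro j
    induction j using Fin.cases with
    | zero =>
      rw [hT0]
      have h1 : (0:ℝ) < (0 + s) * ∏ i, ((0:ℝ) + a i) :=
        mul_pos (by linarith) (Finset.prod_pos fun i _ => by linarith [hpos i])
      rw [hQeval, hPeval]
      simpa using h1
    | succ i =>
      have hTi : T i.succ = -(a i) := by simp [hTdef]
      rw [hTi, hQt, Fin.val_succ]
      have h := mul_pos (hpos i) (sign_erase_prod a ha i)
      calc (0:ℝ) < a i * ((-1) ^ (i : ℕ) * ∏ k ∈ Finset.univ.erase i, (a k - a i)) := h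
      _ = (-1) ^ ((i : ℕ) + 1) * (-(a i) * ∏ k ∈ Finset.univ.erase i, (a k - a i)) := by
          ring
  have hroot : ∀ j : Fin n, ∃ x ∈ Set.Ioo (T j.succ) (T j.castSucc), Q.eval x = 0 := by
    intro j
    have hlt : T j.succ < T j.castSucc := hT Fin.castSucc_lt_succ
    apply exists_zero_of_mul_neg (Polynomial.continuous Q) hlt
    have h1 := hQsign j.succ
    have h2 := hQsign j.castSucc
    rw [Fin.val_succ] at h1
    rw [Fin.coe_castSucc] at h2
    set e : ℝ := (-1 : ℝ) ^ (j : ℕ) with he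
    have h1' : e * Q.eval (T j.succ) < 0 := by
      have : (-1:ℝ) ^ ((j:ℕ) + 1) * Q.eval (T j.succ) = -(e * Q.eval (T j.succ)) := by
        rw [he]; ring
      linarith [this ▸ h1]
    have hee : e * e = 1 := by
      rw [he, ← pow_add, ← two_mul, pow_mul]
      norm_num
    have : Q.eval (T j.succ) * Q.eval (T j.castSucc)
        = (e * Q.eval (T j.succ)) * (e * Q.eval (T j.castSucc)) := by
      calc Q.eval (T j.succ) * Q.eval (T j.castSucc)
          = (e * e) * (Q.eval (T j.succ) * Q.eval (T j.castSucc)) := by rw [hee]; ring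
        _ = (e * Q.eval (T j.succ)) * (e * Q.eval (T j.castSucc)) := by ring
    rw [this]
    exact mul_neg_of_neg_of_pos h1' h2
  choose u hu1 hu2 using hroot
  have hu_lt0 : ∀ j, u j < 0 := by
    intro j
    have := (hu1 j).2
    calc u j < T j.castSucc := this
    _ ≤ T 0 := hT.antitone (Fin.zero_le _)
    _ = 0 := hT0
  have huanti : StrictAnti u := by
    intro i k hik
    calc u k < T k.castSucc := (hu1 k).2
    _ ≤ T i.succ := hT.antitone (by
        rw [Fin.le_def, Fin.val_succ, Fin.coe_castSucc]
        exact hik)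
    _ < u i := (hu1 i).1
  have huinj : Function.Injective u := huanti.injective
  set m : Multiset ℝ := Finset.univ.val.map u with hmdef
  have hm_nodup : m.Nodup := Finset.univ.nodup.map huinj
  have hm_le : m ≤ Q.roots := by
    rw [Multiset.le_iff_count]
    intro x
    by_cases hx : x ∈ m
    · rw [Multiset.count_eq_one_of_mem hm_nodup hx]
      rw [Nat.one_le_iff_ne_zero, ← Nat.pos_iff_ne_zero, Multiset.count_pos]
      obtain ⟨j, -, rfl⟩ := Multiset.mem_map.mp hx
      rw [Polynomial.mem_roots hQm.ne_zero]
      exact hu2 j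
    · rw [Multiset.count_eq_zero_of_notMem hx]
      exact Nat.zero_le _
  have hdvd : (∏ j, (X - C (u j))) ∣ Q := by
    have heq : (∏ j, (X - C (u j))) = (m.map fun r => X - C r).prod := by
      rw [hmdef, Multiset.map_map]
      rfl
    rw [heq]
    exact (Multiset.prod_dvd_prod_of_le (Multiset.map_le_map hm_le)).trans
      (Polynomial.prod_multiset_X_sub_C_dvd Q)
  obtain ⟨q, hq⟩ := hdvd
  set R : ℝ[X] := ∏ j, (X - C (u j)) with hRdef
  have hRm : R.Monic := monic_prod_of_monic _ _ fun i _ => monic_X_sub_C _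
  have hRdeg : R.natDegree = n := by
    rw [hRdef, Polynomial.natDegree_prod _ _ fun i _ => (monic_X_sub_C (u i)).ne_zero]
    simp [Polynomial.natDegree_X_sub_C]
  have hqm : q.Monic := hRm.of_mul_monic_left (hq ▸ hQm)
  have hqdeg : q.natDegree = 1 := by
    have := hQdeg
    rw [hq, hRm.natDegree_mul hqm, hRdeg] at this
    omega
  have hqq : q = X + C (q.coeff 0) := hqm.eq_X_add_C hqdeg
  set c : ℝ := q.coeff 0 with hcdef
  have hTlast : ∀ j : Fin n, T (Fin.last n) ≤ T j.succ :=
    fun j => hT.antitone (Fin.le_last _)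
  have hτu : ∀ j : Fin n, T (Fin.last n) < u j :=
    fun j => lt_of_le_of_lt (hTlast j) (hu1 j).1
  have hτc : 0 < T (Fin.last n) + c := by
    have hQτ : Q.eval (T (Fin.last n)) =
        (∏ j, (T (Fin.last n) - u j)) * (T (Fin.last n) + c) := by
      rw [hq, hqq, Polynomial.eval_mul, Polynomial.eval_add, Polynomial.eval_X,
        Polynomial.eval_C, hRdef, Polynomial.eval_prod]
      simp
    have hsgn := hQsign (Fin.last n)
    rw [Fin.val_last, hQτ] at hsgn
    have hPr : 0 < (-1 : ℝ) ^ n * ∏ j, (T (Fin.last n) - u j) := by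
      have : ∀ j ∈ Finset.univ, (T (Fin.last n) - u j) = -(u j - T (Fin.last n)) :=
        fun j _ => by ring
      rw [Finset.prod_congr rfl this]
      have := neg_prod_sign Finset.univ (fun j => u j - T (Fin.last n))
        (fun j _ => sub_pos.mpr (hτu j))
      simpa using this
    nlinarith [hPr, hsgn]
  have hcu : ∀ j : Fin n, -c < u j := fun j => by linarith [hτu j]
  have hc_pos : 0 < c := by
    have := hcu ⟨0, hn⟩
    have := hu_lt0 ⟨0, hn⟩
    linarith
  refine ⟨Fin.snoc (fun j => -(u j)) c, ?_, ?_, ?_⟩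
  · intro i k hik
    induction k using Fin.lastCases with
    | last =>
      have hne : i ≠ Fin.last n := ne_of_lt hik
      obtain ⟨i', rfl⟩ := Fin.exists_castSucc_eq.mpr hne
      rw [Fin.snoc_castSucc, Fin.snoc_last]
      linarith [hcu i']
    | cast k =>
      have hne : i ≠ Fin.last n := ne_of_lt (lt_of_lt_of_le hik (Fin.le_last _))
      obtain ⟨i', rfl⟩ := Fin.exists_castSucc_eq.mpr hne
      rw [Fin.snoc_castSucc, Fin.snoc_castSucc]
      have : i' < k := by
        rwa [Fin.castSucc_lt_castSucc_iff] at hik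
      linarith [huanti this]
  · intro j
    induction j using Fin.lastCases with
    | last => rw [Fin.snoc_last]; exact hc_pos
    | cast j =>
      rw [Fin.snoc_castSucc]
      linarith [hu_lt0 j]
  · rw [Fin.prod_univ_castSucc]
    simp only [Fin.snoc_castSucc, Fin.snoc_last]
    have : ∀ j : Fin n, X + C (-(u j)) = X - C (u j) := by
      intro j
      rw [map_neg, sub_eq_add_neg]
    rw [Finset.prod_congr rfl fun j _ => this j]
    rw [← hRdef, hq, hqq]

lemma main_pos (r : ℕ) (hr : 0 < r) :
    ∀ n, ∃ b : Fin n → ℝ, StrictMono b ∧ (∀ i, 0 < b i) ∧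
      rBP r n = ∏ i, (X + C (b i))
  | 0 => ⟨Fin.elim0, fun i => i.elim0, fun i => i.elim0, by
      simp [rBP, rS]⟩
  | (n + 1) => by
      obtain ⟨a, ha, hpos, hP⟩ := main_pos r hr n
      obtain ⟨b, h1, h2, h3⟩ := key (r : ℝ) (by exact_mod_cast hr) a ha hpos
      exact ⟨b, h1, h2, by rw [rBP_succ, hP, h3]⟩

lemma aux_pos (n r : ℕ) (hr : 0 < r) (z : ℂ)
    (hz : ∑ k ∈ Finset.range (n + 1), (rS r n k : ℂ) * z ^ k = 0) :
    z.im = 0 ∧ z.re ≤ 0 := by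
  obtain ⟨b, _, hbpos, hP⟩ := main_pos r hr n
  have haev : Polynomial.aeval z (rBP r n) = 0 := by
    rw [rBP]
    rw [map_sum]
    simpa using hz
  rw [hP, map_prod] at haev
  simp only [map_add, Polynomial.aeval_X, Polynomial.aeval_C] at haev
  obtain ⟨i, -, hi⟩ := Finset.prod_eq_zero_iff.mp haev
  have : z = -((b i : ℝ) : ℂ) := by
    have : algebraMap ℝ ℂ (b i) = ((b i : ℝ) : ℂ) := rfl
    rw [this] at hi
    linear_combination hi
  rw [this]
  constructor
  · simp
  · simp [neg_nonpos]
    exact (hbpos i).le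

lemma rS_zero_succ : ∀ n k, rS 0 (n + 1) (k + 1) = rS 1 n k := by
  intro n
  induction n with
  | zero =>
    intro k
    match k with
    | 0 => rfl
    | k + 1 =>
      show (k + 2 + 0) * rS 0 0 (k + 2) + rS 0 0 (k + 1) = 0
      rfl
  | succ n ih =>
    intro k
    match k with
    | 0 =>
      show (0 + 1 + 0) * rS 0 (n + 1) 1 + rS 0 (n + 1) 0 = 1 * rS 1 n 0
      have h0 : rS 0 (n + 1) 0 = 0 := by show 0 * rS 0 n 0 = 0; ring
      rw [h0, ih 0]
      ring
    | k + 1 =>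
      show (k + 2 + 0) * rS 0 (n + 1) (k + 2) + rS 0 (n + 1) (k + 1)
          = (k + 1 + 1) * rS 1 n (k + 1) + rS 1 n k
      rw [ih (k + 1), ih k]

theorem rBellPoly_roots_real_nonpos (n r : ℕ) (z : ℂ)
    (hz : ∑ k ∈ Finset.range (n + 1), (rS r n k : ℂ) * z ^ k = 0) :
    z.im = 0 ∧ z.re ≤ 0 := by
  rcases Nat.eq_zero_or_pos r with rfl | hr
  · rcases n with _ | m
    · simp [rS] at hz
    · rw [Finset.sum_range_succ'] at hz
      have h0 : rS 0 (m + 1) 0 = 0 := by show 0 * rS 0 m 0 = 0; ring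
      rw [h0] at hz
      simp only [rS_zero_succ, Nat.cast_zero, zero_mul, add_zero] at hz
      have : (∑ k ∈ Finset.range (m + 1), (rS 1 m k : ℂ) * z ^ k) * z = 0 := by
        rw [Finset.sum_mul, ← hz]
        exact Finset.sum_congr rfl fun k _ => by ring
      rcases mul_eq_zero.mp this with h | h
      · exact aux_pos m 1 one_pos z h
      · subst h; simp
  · exact aux_pos n r hr z hz
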